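/- arXiv:2112.03800 — 3 statements merged into one kernel-verified Lean document; each statement's English description precedes it below -/
import Mathlib

section
/- Let (Y, μ) be a probability space, let S : Y → Y be a measurable measure-preserving map, and let Q₀ ⊆ Y be a measurable set with μ(Q₀) = 1/2. Then for every M ≥ 1, every y₀ ∈ Y, and every real ε with 0 ≤ ε ≤ 1/2, the set { y ∈ Y : d̄_M(y, y₀) ≤ ε } has μ-measure at most 1/2 + 2ε. -/
open MeasureTheory in
open Classical in
/-- Lemma: for a measure-preserving map `S` on a probability space and a set `Q₀`
of measure `1/2`, any ball of radius `ε ≤ 1/2` in the `Q`-name Hamming distance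
`d̄_M` has measure at most `1/2 + 2ε`. -/
theorem stmt_1 {Y : Type*} [MeasurableSpace Y] (μ : Measure Y) [IsProbabilityMeasure μ]
    (S : Y → Y) (hS : MeasurePreserving S μ μ)
    (Q₀ : Set Y) (hQ₀ : MeasurableSet Q₀) (hμQ₀ : μ Q₀ = 1 / 2)
    (M : ℕ) (hM : 1 ≤ M) (y₀ : Y) (ε : ℝ) (hε0 : 0 ≤ ε) (hε : ε ≤ 1 / 2) :
    μ {y | (((Finset.range M).filter fun i =>
        ¬((S^[i] y ∈ Q₀) ↔ (S^[i] y₀ ∈ Q₀))).card : ℝ) / M ≤ ε}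
      ≤ ENNReal.ofReal (1 / 2 + 2 * ε) := by
  classical
  -- the set of "matching" coordinates
  set C : ℕ → Set Y := fun i => {y | (S^[i] y ∈ Q₀) ↔ (S^[i] y₀ ∈ Q₀)} with hC
  have hCmeas : ∀ i, MeasurableSet (C i) := by
    intro i
    by_cases h : S^[i] y₀ ∈ Q₀
    · have : C i = S^[i] ⁻¹' Q₀ := by
        ext y; simp [hC, h]
      rw [this]
      exact ((hS.iterate i).measurable) hQ₀
    · have : C i = S^[i] ⁻¹' Q₀ᶜ := by
        ext y; simp [hC, h]
      rw [this]
      exact ((hS.iterate i).measurable) hQ₀.compl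
  have hCμ : ∀ i, μ (C i) = 1 / 2 := by
    intro i
    by_cases h : S^[i] y₀ ∈ Q₀
    · have hEq : C i = S^[i] ⁻¹' Q₀ := by ext y; simp [hC, h]
      rw [hEq, (hS.iterate i).measure_preimage hQ₀.nullMeasurableSet, hμQ₀]
    · have hEq : C i = S^[i] ⁻¹' Q₀ᶜ := by ext y; simp [hC, h]
      rw [hEq, (hS.iterate i).measure_preimage hQ₀.compl.nullMeasurableSet,
        measure_compl hQ₀ (measure_ne_top μ _), hμQ₀, measure_univ]
      exact ENNReal.sub_eq_of_eq_add (by norm_num) (ENNReal.add_halves 1).symm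
  -- the counting function
  set g : Y → ENNReal := fun y =>
    ∑ i ∈ Finset.range M, (C i).indicator (1 : Y → ENNReal) y with hg
  have hgcard : ∀ y, g y =
      (((Finset.range M).filter fun i => (S^[i] y ∈ Q₀) ↔ (S^[i] y₀ ∈ Q₀)).card : ENNReal) := by
    intro y
    rw [hg]
    simp only [Set.indicator_apply, hC, Set.mem_setOf_eq, Pi.one_apply]
    rw [Finset.sum_boole]
  have hlint : ∫⁻ y, g y ∂μ = (M : ENNReal) / 2 := by
    rw [hg]
    rw [lintegral_finset_sum _ (fun i _ => (measurable_one.indicator (hCmeas i)))]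
    have : ∀ i ∈ Finset.range M, ∫⁻ y, (C i).indicator (1 : Y → ENNReal) y ∂μ = 1 / 2 := by
      intro i _
      rw [lintegral_indicator (hCmeas i)]
      simp [hCμ i]
    rw [Finset.sum_congr rfl this, Finset.sum_const, Finset.card_range,
      nsmul_eq_mul, mul_one_div]
  -- the ball is contained in the superlevel set of g
  set A := {y | (((Finset.range M).filter fun i =>
      ¬((S^[i] y ∈ Q₀) ↔ (S^[i] y₀ ∈ Q₀))).card : ℝ) / M ≤ ε} with hA
  have hMpos : (0:ℝ) < M := by exact_mod_cast hM
  have hsub : A ⊆ {y | ENNReal.ofReal ((1 - ε) * M) ≤ g y} := by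
    intro y hy
    have hy2 : (((Finset.range M).filter fun i =>
        ¬((S^[i] y ∈ Q₀) ↔ (S^[i] y₀ ∈ Q₀))).card : ℝ) / M ≤ ε := hy
    have hy' : (((Finset.range M).filter fun i =>
        ¬((S^[i] y ∈ Q₀) ↔ (S^[i] y₀ ∈ Q₀))).card : ℝ) ≤ ε * M := by
      rw [div_le_iff₀ hMpos] at hy2
      exact hy2
    have hsum : ((Finset.range M).filter fun i => (S^[i] y ∈ Q₀) ↔ (S^[i] y₀ ∈ Q₀)).card
        + ((Finset.range M).filter fun i => ¬((S^[i] y ∈ Q₀) ↔ (S^[i] y₀ ∈ Q₀))).card = M := by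
      rw [Finset.card_filter_add_card_filter_not, Finset.card_range]
    have hcard : (1 - ε) * M ≤
        (((Finset.range M).filter fun i => (S^[i] y ∈ Q₀) ↔ (S^[i] y₀ ∈ Q₀)).card : ℝ) := by
      have h2 : (((Finset.range M).filter fun i => (S^[i] y ∈ Q₀) ↔ (S^[i] y₀ ∈ Q₀)).card : ℝ)
          + (((Finset.range M).filter fun i =>
            ¬((S^[i] y ∈ Q₀) ↔ (S^[i] y₀ ∈ Q₀))).card : ℝ) = M := by exact_mod_cast hsum
      nlinarith
    simp only [Set.mem_setOf_eq, hgcard y]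
    refine le_trans (ENNReal.ofReal_le_ofReal hcard) ?_
    exact le_of_eq (ENNReal.ofReal_natCast _)
  -- Markov-type inequality
  have hmarkov : ENNReal.ofReal ((1 - ε) * M) * μ A ≤ (M : ENNReal) / 2 := by
    calc ENNReal.ofReal ((1 - ε) * M) * μ A
        ≤ ENNReal.ofReal ((1 - ε) * M) * μ {y | ENNReal.ofReal ((1 - ε) * M) ≤ g y} := by
          exact mul_le_mul_right (measure_mono hsub) _
      _ ≤ ∫⁻ y, g y ∂μ := by
          apply mul_meas_ge_le_lintegral₀
          exact (Finset.measurable_sum _ (fun i _ =>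
            measurable_one.indicator (hCmeas i))).aemeasurable
      _ = (M : ENNReal) / 2 := hlint
  have hc0 : (0:ℝ) < (1 - ε) * M := by nlinarith
  have hcne : ENNReal.ofReal ((1 - ε) * M) ≠ 0 := by
    simp [ENNReal.ofReal_eq_zero, not_le, hc0]
  have hctop : ENNReal.ofReal ((1 - ε) * M) ≠ ⊤ := ENNReal.ofReal_ne_top
  have hdiv : μ A ≤ ((M : ENNReal) / 2) / ENNReal.ofReal ((1 - ε) * M) := by
    rw [ENNReal.le_div_iff_mul_le (Or.inl hcne) (Or.inl hctop), mul_comm]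
    exact hmarkov
  refine hdiv.trans ?_
  rw [ENNReal.div_le_iff hcne hctop]
  have : (M : ENNReal) / 2 = ENNReal.ofReal (M / 2) := by
    rw [ENNReal.ofReal_div_of_pos (by norm_num)]
    simp
  rw [this, ← ENNReal.ofReal_mul (by positivity)]
  apply ENNReal.ofReal_le_ofReal
  nlinarith [mul_nonneg (mul_nonneg hε0 hMpos.le) (by linarith : (0:ℝ) ≤ 3/2 - 2*ε)]
end

section
/- Let σ denote the shift (σx)_i = x_{i+1} on {0,1}^ℤ, let X ⊆ {0,1}^ℤ be a nonempty closed shift-invariant subset, and for n ≥ 1 let a_n be the number of words w ∈ {0,1}^n that occur as (x_j, …, x_{j+n−1}) for some x ∈ X and j ∈ ℤ. Let μ₀ be an ergodic shift-invariant Borel probability measure on {0,1}^ℤ with μ₀(X) = 1, and let Q₀ ⊆ {0,1}^ℤ be a Borel set. Then for all ε and δ with 0 < ε < 1/100 and 0 < δ < 1/100 there exists N such that for every n ≥ N there exist a natural number m ≤ a_{2n} and points x_1, …, x_m ∈ X with μ₀( ⋃_{i=1}^m B_n(x_i, ε) ) > 1 − δ, where B_n(x₀, ε) = { x : d̄_n(x,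 x₀) < ε } and d̄_n(x, x₀) = (1/n)·#{ 0 ≤ i < n : (σ^i x ∈ Q₀) ≠ (σ^i x₀ ∈ Q₀) }. -/
open MeasureTheory

/-- Sets depending measurably on finitely many coordinates. -/
def stmt9Alg : Set (Set (ℤ → Bool)) :=
  {s | MeasurableSet s ∧ ∃ K : ℕ, ∀ x y : ℤ → Bool,
    (∀ j : ℤ, j.natAbs ≤ K → x j = y j) → (x ∈ s ↔ y ∈ s)}

theorem stmt9Alg_isSetAlgebra : MeasureTheory.IsSetAlgebra stmt9Alg := by
  constructor
  · exact ⟨MeasurableSet.empty, 0, fun x y _ => Iff.rfl⟩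
  · rintro s ⟨hm, K, hK⟩
    exact ⟨hm.compl, K, fun x y h => not_congr (hK x y h)⟩
  · rintro s t ⟨hms, K1, hK1⟩ ⟨hmt, K2, hK2⟩
    refine ⟨hms.union hmt, max K1 K2, fun x y h => ?_⟩
    have h1 := hK1 x y (fun j hj => h j (le_trans hj (le_max_left _ _)))
    have h2 := hK2 x y (fun j hj => h j (le_trans hj (le_max_right _ _)))
    simp only [Set.mem_union, h1, h2]

theorem stmt9Alg_gen : (inferInstance : MeasurableSpace (ℤ → Bool))
    = MeasurableSpace.generateFrom stmt9Alg := by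
  refine le_antisymm ?_ (MeasurableSpace.generateFrom_le fun s hs => hs.1)
  have h0 : (inferInstance : MeasurableSpace (ℤ → Bool)) = MeasurableSpace.pi := rfl
  rw [h0, MeasurableSpace.pi]
  refine iSup_le fun j => ?_
  rw [← measurable_iff_comap_le]
  intro s hs
  refine MeasurableSpace.measurableSet_generateFrom ?_
  refine ⟨(measurable_pi_apply j) hs, j.natAbs, fun x y h => ?_⟩
  simp only [Set.mem_preimage, h j le_rfl]

set_option maxHeartbeats 1000000 in
open MeasureTheory in
open Classical in
/-- Lemma "1-delta" from the paper: let `X` be a nonempty closed shift-invariant subset of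
`{0,1}^ℤ`, let `a_n` count the `n`-blocks occurring in `X`, let `μ₀` be an ergodic
shift-invariant probability measure with `μ₀(X) = 1`, and let `Q₀` be a Borel set.
Then for `0 < ε < 1/100` and `0 < δ < 1/100` there is `N` such that for all `n ≥ N`,
at most `a_{2n}` Hamming balls `B_n(x_i, ε)` (with centers in `X`) suffice to cover a set
of measure `> 1 − δ`. -/
theorem stmt_9
    (σ : (ℤ → Bool) → (ℤ → Bool)) (hσ : ∀ x i, σ x i = x (i + 1))
    (X : Set (ℤ → Bool)) (hXne : X.Nonempty) (hXcl : IsClosed X)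
    (hXinv : σ ⁻¹' X = X)
    (a : ℕ → ℕ)
    (ha : ∀ n, a n = (Finset.univ.filter fun w : Fin n → Bool =>
        ∃ x ∈ X, ∃ j : ℤ, ∀ i : Fin n, x (j + (i : ℤ)) = w i).card)
    (μ₀ : Measure (ℤ → Bool)) [IsProbabilityMeasure μ₀]
    (hσerg : Ergodic σ μ₀) (hμX : μ₀ X = 1)
    (Q₀ : Set (ℤ → Bool)) (hQ₀ : MeasurableSet Q₀)
    (ε δ : ℝ) (hε0 : 0 < ε) (hε : ε < 1 / 100) (hδ0 : 0 < δ) (hδ : δ < 1 / 100) :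
    ∃ N : ℕ, ∀ n ≥ N, ∃ m : ℕ, m ≤ a (2 * n) ∧ ∃ x : Fin m → (ℤ → Bool),
      (∀ i, x i ∈ X) ∧
      ENNReal.ofReal (1 - δ) <
        μ₀ (⋃ i : Fin m, {y | (((Finset.range n).filter fun k =>
          ¬((σ^[k] y ∈ Q₀) ↔ (σ^[k] (x i) ∈ Q₀))).card : ℝ) / n < ε}) := by
  classical
  -- iterate formula
  have hiter : ∀ (k : ℕ) (x : ℤ → Bool) (j : ℤ), σ^[k] x j = x (j + k) := by
    intro k
    induction k with
    | zero => intro x j; simp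
    | succ k ih =>
      intro x j
      rw [Function.iterate_succ_apply', hσ, ih]
      congr 1
      push_cast
      ring
  -- approximate Q₀ by a finitely-determined set
  have md := Measure.MeasureDense.of_generateFrom_isSetAlgebra_finite (μ := μ₀)
    stmt9Alg_isSetAlgebra stmt9Alg_gen
  obtain ⟨Q, ⟨hQm, K, hK⟩, hQapprox⟩ :=
    md.approx Q₀ hQ₀ (measure_ne_top μ₀ Q₀) (ε * δ / 8) (by positivity)
  set D : Set (ℤ → Bool) := symmDiff Q₀ Q with hD
  clear_value D
  have hDm : MeasurableSet D := by rw [hD]; exact hQ₀.symmDiff hQm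
  have hDsmall : μ₀ D < ENNReal.ofReal (ε * δ / 8) := hQapprox
  -- measurability of σ iterates
  have hσm : Measurable σ := hσerg.toMeasurePreserving.measurable
  refine ⟨2 * K + 2, fun n hn => ?_⟩
  have hn2 : 2 ≤ n := by omega
  have hnpos : 0 < n := by omega
  -- visit counting function
  set f : (ℤ → Bool) → ℕ := fun y => ((Finset.range n).filter fun k => σ^[k] y ∈ D).card
    with hf
  set F : (ℤ → Bool) → ENNReal := fun y => (f y : ENNReal) with hF
  have hFsum : ∀ y, F y
      = ∑ k ∈ Finset.range n, Set.indicator (σ^[k] ⁻¹' D) 1 y := by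
    intro y
    rw [hF, hf]
    simp only [Finset.card_filter]
    push_cast
    refine Finset.sum_congr rfl fun k _ => ?_
    by_cases h : σ^[k] y ∈ D <;> simp [Set.indicator, h]
  have hFm : Measurable F := by
    have : F = fun y => ∑ k ∈ Finset.range n, Set.indicator (σ^[k] ⁻¹' D) 1 y :=
      funext hFsum
    rw [this]
    exact Finset.measurable_sum _ fun k _ =>
      (measurable_one.indicator (hDm.preimage (hσm.iterate k)))
  have hint : ∫⁻ y, F y ∂μ₀ = n * μ₀ D := by
    calc ∫⁻ y, F y ∂μ₀
        = ∫⁻ y, ∑ k ∈ Finset.range n, Set.indicator (σ^[k] ⁻¹' D) 1 y ∂μ₀ :=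
          lintegral_congr hFsum
      _ = ∑ k ∈ Finset.range n, ∫⁻ y, Set.indicator (σ^[k] ⁻¹' D) 1 y ∂μ₀ :=
          lintegral_finset_sum _ fun k _ =>
            measurable_one.indicator (hDm.preimage (hσm.iterate k))
      _ = ∑ k ∈ Finset.range n, μ₀ (σ^[k] ⁻¹' D) :=
          Finset.sum_congr rfl fun k _ =>
            lintegral_indicator_one (hDm.preimage (hσm.iterate k))
      _ = ∑ k ∈ Finset.range n, μ₀ D :=
          Finset.sum_congr rfl fun k _ =>
            (hσerg.toMeasurePreserving.iterate k).measure_preimage hDm.nullMeasurableSet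
      _ = n * μ₀ D := by simp [Finset.sum_const, mul_comm]
  -- Markov
  set c : ENNReal := ENNReal.ofReal (ε / 2) * n with hc
  have hc0 : c ≠ 0 := by
    refine mul_ne_zero ?_ ?_
    · simp [ENNReal.ofReal_pos.mpr (by linarith : (0:ℝ) < ε / 2), ne_of_gt]
    · exact_mod_cast hnpos.ne'
  have hctop : c ≠ ⊤ := ENNReal.mul_ne_top ENNReal.ofReal_ne_top (ENNReal.natCast_ne_top n)
  set Bad : Set (ℤ → Bool) := {y | c ≤ F y} with hBad
  have hBadm : MeasurableSet Bad := measurableSet_le measurable_const hFm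
  have hmarkov : c * μ₀ Bad ≤ ∫⁻ y, F y ∂μ₀ :=
    mul_meas_ge_le_lintegral₀ hFm.aemeasurable c
  have hBadsmall : μ₀ Bad ≤ ENNReal.ofReal (δ / 4) := by
    rw [← ENNReal.mul_le_mul_iff_right hc0 hctop]
    refine hmarkov.trans ?_
    rw [hint, hc]
    calc (n : ENNReal) * μ₀ D ≤ (n : ENNReal) * ENNReal.ofReal (ε * δ / 8) := by
          exact mul_le_mul_right hDsmall.le _
      _ = ENNReal.ofReal (ε / 2) * n * ENNReal.ofReal (δ / 4) := by
          rw [mul_comm (ENNReal.ofReal (ε / 2)) (n : ENNReal), mul_assoc,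
            ← ENNReal.ofReal_mul (by linarith)]
          congr 2
          ring
  -- the good set
  set G : Set (ℤ → Bool) := Badᶜ with hG
  have hGmeas : μ₀ G = 1 - μ₀ Bad := by
    rw [hG, measure_compl hBadm (measure_ne_top μ₀ Bad), measure_univ]
  have hGbig : ENNReal.ofReal (1 - δ) < μ₀ (X ∩ G) := by
    have h1 : μ₀ G ≤ μ₀ (X ∩ G) + μ₀ Xᶜ := by
      refine le_trans (measure_mono ?_) (measure_union_le _ _)
      intro y hy
      by_cases hyX : y ∈ X
      · exact Or.inl ⟨hyX, hy⟩
      · exact Or.inr hyX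
    have hXc : μ₀ Xᶜ = 0 := by
      rw [measure_compl hXcl.measurableSet (measure_ne_top μ₀ X), hμX, measure_univ,
        tsub_self]
    rw [hXc, add_zero] at h1
    have h2 : ENNReal.ofReal (1 - δ) < μ₀ G := by
      rw [hGmeas]
      refine lt_of_lt_of_le ?_ (tsub_le_tsub_left hBadsmall 1)
      have e1 : (1 : ENNReal) - ENNReal.ofReal (δ / 4) = ENNReal.ofReal (1 - δ / 4) := by
        rw [ENNReal.ofReal_sub 1 (by linarith), ENNReal.ofReal_one]
      rw [e1]
      exact (ENNReal.ofReal_lt_ofReal_iff (by linarith)).mpr (by linarith)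
    exact lt_of_lt_of_le h2 h1
  -- membership in G in real terms
  have hGreal : ∀ y ∈ G, (f y : ℝ) < ε / 2 * n := by
    intro y hy
    have h0 : ((f y : ℕ) : ENNReal) < c := not_le.mp hy
    have h1 : ((f y : ℕ) : ENNReal) = ENNReal.ofReal ((f y : ℕ) : ℝ) := by
      rw [ENNReal.ofReal_natCast]
    have h2 : c = ENNReal.ofReal (ε / 2 * n) := by
      rw [hc, ENNReal.ofReal_mul (by linarith), ENNReal.ofReal_natCast]
    rw [h1, h2] at h0
    exact (ENNReal.ofReal_lt_ofReal_iff_of_nonneg (Nat.cast_nonneg _)).mp h0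
  -- Q is determined on windows
  have hQwindow : ∀ y z : ℤ → Bool,
      (∀ t : ℤ, -(K:ℤ) ≤ t → t ≤ 2*n - 1 - K → y t = z t) →
      ∀ k < n, (σ^[k] y ∈ Q ↔ σ^[k] z ∈ Q) := by
    intro y z hyz k hk
    refine hK _ _ fun j hj => ?_
    rw [hiter, hiter]
    refine hyz _ ?_ ?_ <;> omega
  -- blocks
  set blk : (ℤ → Bool) → (Fin (2 * n) → Bool) := fun y i => y (-(K:ℤ) + (i : ℤ)) with hblk
  have hblk_eq : ∀ y z : ℤ → Bool, blk y = blk z →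
      ∀ t : ℤ, -(K:ℤ) ≤ t → t ≤ 2*n - 1 - K → y t = z t := by
    intro y z h t ht1 ht2
    have hi : (t + K).toNat < 2 * n := by omega
    have := congrFun h ⟨(t + K).toNat, hi⟩
    simp only [hblk] at this
    have hcast : (((⟨(t + K).toNat, hi⟩ : Fin (2 * n)) : ℕ) : ℤ) = t + K := by
      simp [Int.toNat_of_nonneg (by omega : (0:ℤ) ≤ t + K)]
    rw [hcast] at this
    have : y (-(K:ℤ) + (t + K)) = z (-(K:ℤ) + (t + K)) := this
    simpa using this
  -- the finset of blocks of good points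
  set T : Finset (Fin (2 * n) → Bool) :=
    Finset.univ.filter (fun b => ∃ y, y ∈ X ∧ y ∈ G ∧ blk y = b) with hT
  refine ⟨T.card, ?_, ?_⟩
  · rw [ha]
    refine Finset.card_le_card ?_
    intro b hb
    rw [hT, Finset.mem_filter] at hb
    obtain ⟨-, y, hyX, -, hby⟩ := hb
    rw [Finset.mem_filter]
    exact ⟨Finset.mem_univ _, y, hyX, -(K:ℤ), fun i => by rw [← hby]⟩
  · -- centers
    have hwit : ∀ i : Fin T.card, ∃ y, y ∈ X ∧ y ∈ G ∧ blk y = (T.equivFin.symm i : Fin (2*n) → Bool) := by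
      intro i
      exact (Finset.mem_filter.mp (T.equivFin.symm i).2).2
    refine ⟨fun i => Classical.choose (hwit i), fun i => (Classical.choose_spec (hwit i)).1, ?_⟩
    -- coverage
    refine lt_of_lt_of_le hGbig (measure_mono ?_)
    intro y ⟨hyX, hyG⟩
    have hbT : blk y ∈ T :=
      Finset.mem_filter.mpr ⟨Finset.mem_univ _, ⟨y, hyX, hyG, rfl⟩⟩
    set i : Fin T.card := T.equivFin ⟨blk y, hbT⟩ with hi
    refine Set.mem_iUnion.mpr ⟨i, ?_⟩
    set z := Classical.choose (hwit i) with hz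
    obtain ⟨hzX, hzG, hzblk⟩ := Classical.choose_spec (hwit i)
    have hzy : blk z = blk y := by
      rw [hzblk, hi, Equiv.symm_apply_apply]
    -- same Q-names
    have hQsame : ∀ k < n, (σ^[k] y ∈ Q ↔ σ^[k] z ∈ Q) :=
      hQwindow y z (fun t h1 h2 => (hblk_eq z y hzy t h1 h2).symm)
    -- mismatch bound
    show (((Finset.range n).filter fun k =>
      ¬((σ^[k] y ∈ Q₀) ↔ (σ^[k] z ∈ Q₀))).card : ℝ) / n < ε
    have hsub : (Finset.range n).filter (fun k => ¬((σ^[k] y ∈ Q₀) ↔ (σ^[k] z ∈ Q₀)))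
        ⊆ ((Finset.range n).filter fun k => σ^[k] y ∈ D)
          ∪ ((Finset.range n).filter fun k => σ^[k] z ∈ D) := by
      intro k hk
      rw [Finset.mem_filter] at hk
      obtain ⟨hkr, hkne⟩ := hk
      have hkn : k < n := Finset.mem_range.mp hkr
      have hQk := hQsame k hkn
      rw [Finset.mem_union, Finset.mem_filter, Finset.mem_filter]
      have hmem : σ^[k] y ∈ D ∨ σ^[k] z ∈ D := by
        rw [hD]
        simp only [Set.mem_symmDiff]
        tauto
      tauto
    have hcard : (((Finset.range n).filter fun k =>
        ¬((σ^[k] y ∈ Q₀) ↔ (σ^[k] z ∈ Q₀))).card : ℝ) ≤ (f y : ℝ) + (f z : ℝ) := by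
      have := Finset.card_le_card hsub
      have h2 := Finset.card_union_le ((Finset.range n).filter fun k => σ^[k] y ∈ D)
        ((Finset.range n).filter fun k => σ^[k] z ∈ D)
      rw [hf]
      exact_mod_cast le_trans this h2
    have hfy := hGreal y hyG
    have hfz := hGreal z hzG
    rw [div_lt_iff₀ (by exact_mod_cast hnpos)]
    calc (((Finset.range n).filter fun k =>
        ¬((σ^[k] y ∈ Q₀) ↔ (σ^[k] z ∈ Q₀))).card : ℝ)
        ≤ (f y : ℝ) + (f z : ℝ) := hcard
      _ < ε / 2 * n + ε / 2 * n := by linarith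
      _ = ε * n := by ring
end

section
/- Let (X, μ) and (Y, ν) be probability spaces, let T : X → X and Ŝ : Y → Y be measurable measure-preserving maps, let π : Y → X be a measurable measure-preserving map with π(Ŝ y) = T(π y) for ν-almost every y, and let θ : X → Y be a measurable measure-preserving map with θ(T x) = Ŝ(θ x) for μ-almost every x, admitting a measurable map θ⁻ : Y → X with θ⁻(θ x) = x for μ-almost every x and θ(θ⁻ y) = y for ν-almost every y. Define E = π ∘ θ : X → X. Then: (i) E is measure-preserving; (ii) E(T x) = T(E x) for μ-almost every x; and (iii) if there is no measurable map G : X → Y with G(π y) = y for ν-almost every y, then there is no measurable map F : X → X with F(E x) = x for μ-almost every x. -/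
open MeasureTheory in
/-- Core of "a dominant system is not coalescent": if `π : (Y,ν,Ŝ) → (X,μ,T)` is a factor
map and `θ : (X,μ,T) → (Y,ν,Ŝ)` an isomorphism, then `E = π ∘ θ` is an endomorphism of
`(X,μ,T)`; and if `π` admits no measurable a.e. section inverse (i.e. the extension is
proper) then `E` admits no measurable a.e. left inverse, so `E` is not an automorphism. -/
theorem stmt_11 {X Y : Type*} [MeasurableSpace X] [MeasurableSpace Y]
    (μ : Measure X) (ν : Measure Y) [IsProbabilityMeasure μ] [IsProbabilityMeasure ν]
    (T : X → X) (Shat : Y → Y)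
    (hT : MeasurePreserving T μ μ) (hShat : MeasurePreserving Shat ν ν)
    (π : Y → X) (hπ : MeasurePreserving π ν μ) (hπeq : ∀ᵐ y ∂ν, π (Shat y) = T (π y))
    (θ : X → Y) (hθ : MeasurePreserving θ μ ν) (hθeq : ∀ᵐ x ∂μ, θ (T x) = Shat (θ x))
    (θinv : Y → X) (hθinv : Measurable θinv)
    (hθinv₁ : ∀ᵐ x ∂μ, θinv (θ x) = x) (hθinv₂ : ∀ᵐ y ∂ν, θ (θinv y) = y) :
    MeasurePreserving (π ∘ θ) μ μ ∧
    (∀ᵐ x ∂μ, (π ∘ θ) (T x) = T ((π ∘ θ) x)) ∧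
    ((¬ ∃ G : X → Y, Measurable G ∧ ∀ᵐ y ∂ν, G (π y) = y) →
      ¬ ∃ F : X → X, Measurable F ∧ ∀ᵐ x ∂μ, F ((π ∘ θ) x) = x) := by
  have hθinvMP : MeasurePreserving θinv ν μ := by
    constructor
    · exact hθinv
    · rw [← hθ.map_eq, Measure.map_map hθinv hθ.measurable]
      exact (Measure.map_congr hθinv₁).trans Measure.map_id
  refine ⟨hπ.comp hθ, ?_, ?_⟩
  · have h1 : ∀ᵐ x ∂μ, π (Shat (θ x)) = T (π (θ x)) :=
      hθ.quasiMeasurePreserving.ae hπeq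
    filter_upwards [h1, hθeq] with x h1 h2
    simp [Function.comp, h2, h1]
  · rintro hG ⟨F, hF, hFeq⟩
    apply hG
    refine ⟨θ ∘ F, hθ.measurable.comp hF, ?_⟩
    have h1 : ∀ᵐ x ∂μ, θ (F (π (θ x))) = θ x := by
      filter_upwards [hFeq] with x hx
      simp [Function.comp] at hx ⊢
      rw [hx]
    have h2 : ∀ᵐ y ∂ν, θ (F (π (θ (θinv y)))) = θ (θinv y) :=
      hθinvMP.quasiMeasurePreserving.ae h1
    filter_upwards [h2, hθinv₂] with y h2 hy
    rw [hy] at h2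
    simpa [Function.comp] using h2
end
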